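/- Finite-sample selection bound with minimum separation. Under the hypotheses of the finite-sample selection bound (densities p₀, q₁, …, q_m with q₁ > 0 a.e. on {p₀ > 0}, v_i = d_H(p₀, q_i), s = V(p₀, q₁) ∈ (0, ∞), constants M > 0, 0 < c < 1, t > 0 with d_K(p₀, q₁) ≤ M v₁² and M v₁² + s t < c v_i² for all 2 ≤ i ≤ m), one has P₀^n( ∃ i with 2 ≤ i ≤ m such that ∏_{k=1}^n q₁(X_k) ≤ ∏_{k=1}^n q_i(X_k) ) ≤ 1/(n t² s) + (m − 1) · exp( −(n (1 − c)/2) · min_{2 ≤ i ≤ m} v_i² ). -/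

import Mathlib

open MeasureTheory Real
open scoped ENNReal NNReal

lemma my_sqrt_prod {ι : Type*} (s : Finset ι) (f : ι → ℝ) (hf : ∀ i ∈ s, 0 ≤ f i) :
    Real.sqrt (∏ i ∈ s, f i) = ∏ i ∈ s, Real.sqrt (f i) := by
  classical
  induction s using Finset.induction_on with
  | empty => simp
  | @insert a s' hx ih =>
    rw [Finset.prod_insert hx, Finset.prod_insert hx,
      Real.sqrt_mul (hf a (Finset.mem_insert_self a s')),
      ih (fun i hi => hf i (Finset.mem_insert_of_mem hi))]

lemma my_integral_density {Ω : Type*} [MeasurableSpace Ω] (μ : Measure Ω) (p : Ω → ℝ)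
    (hp : Measurable p) (hp0 : ∀ x, 0 ≤ p x) (g : Ω → ℝ) :
    ∫ x, g x ∂(μ.withDensity fun x => ENNReal.ofReal (p x)) = ∫ x, p x * g x ∂μ := by
  have h : (fun x => ENNReal.ofReal (p x))
      = fun x => (((fun x => (p x).toNNReal) x : ℝ≥0) : ℝ≥0∞) := rfl
  rw [h, integral_withDensity_eq_integral_smul (hp.real_toNNReal) g]
  congr 1
  ext x
  simp [NNReal.smul_def, Real.coe_toNNReal _ (hp0 x)]

lemma my_integrable_density {Ω : Type*} [MeasurableSpace Ω] (μ : Measure Ω) (p : Ω → ℝ)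
    (hp : Measurable p) (hp0 : ∀ x, 0 ≤ p x) (g : Ω → ℝ) :
    Integrable g (μ.withDensity fun x => ENNReal.ofReal (p x)) ↔
      Integrable (fun x => p x * g x) μ := by
  have h : (fun x => ENNReal.ofReal (p x))
      = fun x => (((fun x => (p x).toNNReal) x : ℝ≥0) : ℝ≥0∞) := rfl
  rw [h, integrable_withDensity_iff_integrable_smul (hp.real_toNNReal)]
  constructor <;> intro hh <;>
    · apply hh.congr
      filter_upwards with x
      simp [NNReal.smul_def, Real.coe_toNNReal _ (hp0 x)]

lemma my_integral_eval {Ω : Type*} [MeasureSpace Ω] [IsProbabilityMeasure (volume : Measure Ω)]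
    {n : ℕ} (g : Ω → ℝ) (j : Fin n) :
    ∫ x : Fin n → Ω, g (x j) = ∫ y, g y := by
  calc ∫ x : Fin n → Ω, g (x j)
      = ∫ x : Fin n → Ω, ∏ i, (if i = j then g (x i) else 1) := by
        congr 1; ext x
        rw [Finset.prod_ite_eq' Finset.univ j fun i => g (x i)]
        simp
    _ = ∏ i, ∫ y, (if i = j then g y else 1) :=
        MeasureTheory.integral_fintype_prod_eq_prod (ι := Fin n)
          (fun i y => if i = j then g y else 1)
    _ = ∏ i, (if i = j then ∫ y, g y else 1) := by
        refine Finset.prod_congr rfl fun i _ => ?_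
        split <;> simp
    _ = ∫ y, g y := by
        rw [Finset.prod_ite_eq' Finset.univ j fun _ => ∫ y, g y]
        simp

lemma my_integrable_eval {Ω : Type*} [MeasureSpace Ω] [IsProbabilityMeasure (volume : Measure Ω)]
    {n : ℕ} (g : Ω → ℝ) (hg : Integrable g (volume : Measure Ω)) (j : Fin n) :
    Integrable (fun x : Fin n → Ω => g (x j)) (volume : Measure (Fin n → Ω)) := by
  have h : (fun x : Fin n → Ω => g (x j))
      = fun x => ∏ i, (if i = j then g (x i) else 1) := by
    funext x
    rw [Finset.prod_ite_eq' Finset.univ j fun i => g (x i)]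
    simp
  rw [h]
  exact Integrable.fintype_prod (f := fun i y => if i = j then g y else 1)
    (fun i => by
      rcases eq_or_ne i j with rfl | hij
      · simpa using hg
      · simpa [hij] using (integrable_const (1 : ℝ)))

lemma my_integral_two_eval {Ω : Type*} [MeasureSpace Ω] [IsProbabilityMeasure (volume : Measure Ω)]
    {n : ℕ} (g h : Ω → ℝ) (j k : Fin n) (hjk : j ≠ k) :
    ∫ x : Fin n → Ω, g (x j) * h (x k) = (∫ y, g y) * (∫ y, h y) := by
  calc ∫ x : Fin n → Ω, g (x j) * h (x k)
      = ∫ x : Fin n → Ω, ∏ i, ((if i = j then g (x i) else 1) * (if i = k then h (x i) else 1)) := by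
        congr 1; ext x
        rw [Finset.prod_mul_distrib,
          Finset.prod_ite_eq' Finset.univ j fun i => g (x i),
          Finset.prod_ite_eq' Finset.univ k fun i => h (x i)]
        simp
    _ = ∏ i, ∫ y, ((if i = j then g y else 1) * (if i = k then h y else 1)) :=
        MeasureTheory.integral_fintype_prod_eq_prod (ι := Fin n)
          (fun i y => (if i = j then g y else 1) * (if i = k then h y else 1))
    _ = ∏ i, ((if i = j then ∫ y, g y else 1) * (if i = k then ∫ y, h y else 1)) := by
        refine Finset.prod_congr rfl fun i _ => ?_
        rcases eq_or_ne i j with rfl | hij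
        · simp [hjk]
        · rcases eq_or_ne i k with rfl | hik
          · simp [hij]
          · simp [hij, hik]
    _ = (∫ y, g y) * (∫ y, h y) := by
        rw [Finset.prod_mul_distrib,
          Finset.prod_ite_eq' Finset.univ j fun _ => ∫ y, g y,
          Finset.prod_ite_eq' Finset.univ k fun _ => ∫ y, h y]
        simp

lemma my_integrable_two_eval {Ω : Type*} [MeasureSpace Ω]
    [IsProbabilityMeasure (volume : Measure Ω)]
    {n : ℕ} (g h : Ω → ℝ) (hg : Integrable g (volume : Measure Ω))
    (hh : Integrable h (volume : Measure Ω)) (j k : Fin n) (hjk : j ≠ k) :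
    Integrable (fun x : Fin n → Ω => g (x j) * h (x k)) (volume : Measure (Fin n → Ω)) := by
  have heq : (fun x : Fin n → Ω => g (x j) * h (x k))
      = fun x => ∏ i, ((if i = j then g (x i) else 1) * (if i = k then h (x i) else 1)) := by
    funext x
    rw [Finset.prod_mul_distrib,
      Finset.prod_ite_eq' Finset.univ j fun i => g (x i),
      Finset.prod_ite_eq' Finset.univ k fun i => h (x i)]
    simp
  rw [heq]
  refine Integrable.fintype_prod
    (f := fun i y => (if i = j then g y else 1) * (if i = k then h y else 1)) (fun i => ?_)
  rcases eq_or_ne i j with rfl | hij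
  · simpa [hjk] using hg
  · rcases eq_or_ne i k with rfl | hik
    · simpa [hij] using hh
    · simp only [if_neg hij, if_neg hik, one_mul]
      exact integrable_const (1 : ℝ)

/-- A (probability) density on `(Ω, μ)`: a nonnegative measurable function integrating to 1. -/
def IsDensity {Ω : Type*} [MeasurableSpace Ω] (μ : Measure Ω) (p : Ω → ℝ) : Prop :=
  Measurable p ∧ (∀ x, 0 ≤ p x) ∧ Integrable p μ ∧ ∫ x, p x ∂μ = 1

/-- Squared Hellinger distance `d_H²(p, q) = ∫ (√p − √q)² dμ`. -/
noncomputable def hellSq {Ω : Type*} [MeasurableSpace Ω] (μ : Measure Ω) (p q : Ω → ℝ) : ℝ :=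
  ∫ x, (Real.sqrt (p x) - Real.sqrt (q x)) ^ 2 ∂μ

/-- Kullback–Leibler divergence `d_K(p, q) = ∫ p log(p/q) dμ`. -/
noncomputable def klD {Ω : Type*} [MeasurableSpace Ω] (μ : Measure Ω) (p q : Ω → ℝ) : ℝ :=
  ∫ x, p x * Real.log (p x / q x) ∂μ

/-- Second moment `V(p, q) = ∫ p (log(p/q))² dμ`. -/
noncomputable def klV {Ω : Type*} [MeasurableSpace Ω] (μ : Measure Ω) (p q : Ω → ℝ) : ℝ :=
  ∫ x, p x * (Real.log (p x / q x)) ^ 2 ∂μ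

set_option maxHeartbeats 1000000 in
/-- Finite-sample selection bound with minimum separation: the probability that some
competing density `q i` (`2 ≤ i ≤ m`) attains likelihood at least that of `q 1` is at most
`1/(n t² s) + (m−1)·exp(−(n(1−c)/2)·min_{2 ≤ i ≤ m} v_i²)`. -/
theorem cv_selection_bound_min {Ω : Type*} [MeasurableSpace Ω]
    (μ : Measure Ω) [SigmaFinite μ] (p₀ : Ω → ℝ) (m : ℕ) (hm : 2 ≤ m) (q : ℕ → Ω → ℝ)
    (hp₀ : IsDensity μ p₀)
    (hq : ∀ i ∈ Finset.Icc 1 m, IsDensity μ (q i))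
    (hq₁pos : ∀ᵐ x ∂μ, 0 < p₀ x → 0 < q 1 x)
    (hVint : Integrable (fun x => p₀ x * (Real.log (p₀ x / q 1 x)) ^ 2) μ)
    (hVpos : 0 < klV μ p₀ (q 1))
    (M c t : ℝ) (hM : 0 < M) (hc0 : 0 < c) (hc1 : c < 1) (ht : 0 < t)
    (hdK : klD μ p₀ (q 1) ≤ M * hellSq μ p₀ (q 1))
    (hsep : ∀ i ∈ Finset.Icc 2 m,
      M * hellSq μ p₀ (q 1) + klV μ p₀ (q 1) * t < c * hellSq μ p₀ (q i))
    (P₀ : Measure Ω) [IsProbabilityMeasure P₀]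
    (hP₀ : P₀ = μ.withDensity fun x => ENNReal.ofReal (p₀ x))
    (n : ℕ) (hn : 0 < n) :
    (Measure.pi fun _ : Fin n => P₀)
        {x : Fin n → Ω |
          ∃ i ∈ Finset.Icc 2 m, ∏ k : Fin n, q 1 (x k) ≤ ∏ k : Fin n, q i (x k)}
      ≤ ENNReal.ofReal (1 / ((n : ℝ) * t ^ 2 * klV μ p₀ (q 1)) +
          ((m : ℝ) - 1) *
            Real.exp (-((n : ℝ) * (1 - c) / 2) *
              (Finset.Icc 2 m).inf' (Finset.nonempty_Icc.mpr hm)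
                (fun i => hellSq μ p₀ (q i)))) := by
  classical
  obtain ⟨hp₀m, hp₀0, hp₀i, hp₀1⟩ := hp₀
  obtain ⟨hq1m, hq10, hq1i, hq11⟩ := hq 1 (Finset.mem_Icc.mpr ⟨le_refl 1, le_trans one_le_two hm⟩)
  set s : ℝ := klV μ p₀ (q 1) with hs_def
  have hs_pos : 0 < s := hVpos
  set ℓ : Ω → ℝ := fun y => Real.log (p₀ y / q 1 y) with hℓ_def
  have hℓm : Measurable ℓ := Real.measurable_log.comp (hp₀m.div hq1m)
  -- measure space structure
  letI : MeasureSpace Ω := ⟨P₀⟩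
  haveI hprob : IsProbabilityMeasure (volume : Measure Ω) := ‹IsProbabilityMeasure P₀›
  have hpi : (Measure.pi fun _ : Fin n => P₀) = (volume : Measure (Fin n → Ω)) :=
    (volume_pi).symm
  rw [hpi]
  -- transfer lemmas
  have htrans : ∀ g : Ω → ℝ, ∫ y, g y ∂(volume : Measure Ω) = ∫ x, p₀ x * g x ∂μ := by
    intro g
    rw [show (volume : Measure Ω) = μ.withDensity fun x => ENNReal.ofReal (p₀ x) from hP₀]
    exact my_integral_density μ p₀ hp₀m hp₀0 g
  have htransi : ∀ g : Ω → ℝ, Integrable g (volume : Measure Ω) ↔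
      Integrable (fun x => p₀ x * g x) μ := by
    intro g
    rw [show (volume : Measure Ω) = μ.withDensity fun x => ENNReal.ofReal (p₀ x) from hP₀]
    exact my_integrable_density μ p₀ hp₀m hp₀0 g
  -- moments of ℓ
  have hℓ2_int : Integrable (fun y => ℓ y ^ 2) (volume : Measure Ω) :=
    (htransi _).mpr hVint
  have hs_eq : s = ∫ y, ℓ y ^ 2 ∂(volume : Measure Ω) := by
    rw [htrans]; rfl
  have hℓ_int : Integrable ℓ (volume : Measure Ω) := by
    refine Integrable.mono' ((integrable_const (1 : ℝ)).add hℓ2_int)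
      hℓm.aestronglyMeasurable (ae_of_all _ fun y => ?_)
    have h1 : |ℓ y| ≤ 1 + ℓ y ^ 2 := by nlinarith [abs_nonneg (ℓ y), sq_abs (ℓ y)]
    simpa using h1
  set dK : ℝ := ∫ y, ℓ y ∂(volume : Measure Ω) with hdK_def
  have hklD_eq : klD μ p₀ (q 1) = dK := by rw [hdK_def, htrans]; rfl
  set Y : Ω → ℝ := fun y => ℓ y - dK with hY_def
  have hYm : Measurable Y := hℓm.sub measurable_const
  have hY_int : Integrable Y (volume : Measure Ω) := hℓ_int.sub (integrable_const dK)
  have hY0 : ∫ y, Y y ∂(volume : Measure Ω) = 0 := by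
    rw [hY_def]
    rw [integral_sub hℓ_int (integrable_const dK)]
    simp [hdK_def]
  have hY2_eq : (fun y => Y y * Y y) = fun y => ℓ y ^ 2 - (2 * dK) * ℓ y + dK ^ 2 := by
    funext y; simp only [hY_def]; ring
  have hY2_int : Integrable (fun y => Y y * Y y) (volume : Measure Ω) := by
    rw [hY2_eq]
    exact (hℓ2_int.sub (hℓ_int.const_mul (2 * dK))).add (integrable_const (dK ^ 2))
  set sV : ℝ := ∫ y, Y y * Y y ∂(volume : Measure Ω) with hsV_def
  have hsV_le : sV ≤ s := by
    have h1 : Integrable (fun y => ℓ y ^ 2 - 2 * dK * ℓ y) (volume : Measure Ω) :=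
      hℓ2_int.sub (hℓ_int.const_mul (2 * dK))
    have e1 : ∫ y, (ℓ y ^ 2 - 2 * dK * ℓ y + dK ^ 2) ∂(volume : Measure Ω)
        = (∫ y, (ℓ y ^ 2 - 2 * dK * ℓ y) ∂(volume : Measure Ω)) + dK ^ 2 := by
      rw [integral_add h1 (integrable_const _)]
      simp
    have e2 : ∫ y, (ℓ y ^ 2 - 2 * dK * ℓ y) ∂(volume : Measure Ω)
        = (∫ y, ℓ y ^ 2 ∂(volume : Measure Ω)) - 2 * dK * ∫ y, ℓ y ∂(volume : Measure Ω) := by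
      rw [integral_sub hℓ2_int (hℓ_int.const_mul _), integral_const_mul]
    rw [hsV_def, hY2_eq, e1, e2, ← hdK_def, ← hs_eq]
    nlinarith [sq_nonneg dK]
  -- the Chebyshev event
  set B : Set (Fin n → Ω) := {x | (n : ℝ) * (dK + t * s) ≤ ∑ k, ℓ (x k)} with hB_def
  have hcheb : (volume : Measure (Fin n → Ω)) B
      ≤ ENNReal.ofReal (1 / ((n : ℝ) * t ^ 2 * s)) := by
    set ε : ℝ := (n : ℝ) * (t * s) with hε_def
    have hε : 0 < ε := by
      have : (0 : ℝ) < (n : ℝ) := Nat.cast_pos.mpr hn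
      positivity
    have hsub : B ⊆ {x : Fin n → Ω | ε ^ 2 ≤ (∑ k, Y (x k)) ^ 2} := by
      intro x hx
      have hx' : (n : ℝ) * (dK + t * s) ≤ ∑ k, ℓ (x k) := hx
      have h1 : ∑ k, Y (x k) = (∑ k, ℓ (x k)) - (n : ℝ) * dK := by
        simp only [hY_def, Finset.sum_sub_distrib, Finset.sum_const, Finset.card_univ,
          Fintype.card_fin, nsmul_eq_mul]
      have h2 : ε ≤ ∑ k, Y (x k) := by rw [h1, hε_def]; nlinarith
      have : ε ^ 2 ≤ (∑ k, Y (x k)) ^ 2 := by nlinarith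
      exact this
    have hterm_int : ∀ j k : Fin n,
        Integrable (fun x : Fin n → Ω => Y (x j) * Y (x k)) (volume : Measure (Fin n → Ω)) := by
      intro j k
      rcases eq_or_ne j k with rfl | hjk
      · exact my_integrable_eval (fun y => Y y * Y y) hY2_int j
      · exact my_integrable_two_eval Y Y hY_int hY_int j k hjk
    have hterm_val : ∀ j k : Fin n,
        ∫ x : Fin n → Ω, Y (x j) * Y (x k) = if j = k then sV else 0 := by
      intro j k
      rcases eq_or_ne j k with rfl | hjk
      · rw [if_pos rfl, hsV_def]
        exact my_integral_eval (fun y => Y y * Y y) j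
      · rw [if_neg hjk, my_integral_two_eval Y Y j k hjk, hY0, mul_zero]
    have hF_eq : (fun x : Fin n → Ω => (∑ k, Y (x k)) ^ 2)
        = fun x : Fin n → Ω => ∑ j, ∑ k, Y (x j) * Y (x k) := by
      funext x
      rw [sq, Finset.sum_mul_sum]
    have hF_int : Integrable (fun x : Fin n → Ω => (∑ k, Y (x k)) ^ 2)
        (volume : Measure (Fin n → Ω)) := by
      rw [hF_eq]
      exact integrable_finset_sum _ fun j _ => integrable_finset_sum _ fun k _ => hterm_int j k
    have hF_val : ∫ x : Fin n → Ω, (∑ k, Y (x k)) ^ 2 ≤ (n : ℝ) * s := by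
      rw [hF_eq, integral_finset_sum _ fun j _ =>
        integrable_finset_sum _ fun k _ => hterm_int j k]
      have : ∀ j : Fin n, ∫ x : Fin n → Ω, ∑ k, Y (x j) * Y (x k) = sV := by
        intro j
        rw [integral_finset_sum _ fun k _ => hterm_int j k]
        calc ∑ k, ∫ x : Fin n → Ω, Y (x j) * Y (x k)
            = ∑ k : Fin n, if j = k then sV else 0 :=
              Finset.sum_congr rfl fun k _ => hterm_val j k
          _ = sV := by rw [Finset.sum_ite_eq Finset.univ j fun _ => sV]; simp
      rw [Finset.sum_congr rfl fun j _ => this j]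
      simp only [Finset.sum_const, Finset.card_univ, Fintype.card_fin, nsmul_eq_mul]
      have : (0 : ℝ) ≤ (n : ℝ) := Nat.cast_nonneg n
      nlinarith
    have hmark := mul_meas_ge_le_integral_of_nonneg
      (ae_of_all (volume : Measure (Fin n → Ω)) fun x : Fin n → Ω => sq_nonneg (∑ k, Y (x k)))
      hF_int (ε ^ 2)
    have hfin : (volume : Measure (Fin n → Ω)) {x | ε ^ 2 ≤ (∑ k, Y (x k)) ^ 2} ≠ ⊤ :=
      measure_ne_top _ _
    have htor : ((volume : Measure (Fin n → Ω)) {x | ε ^ 2 ≤ (∑ k, Y (x k)) ^ 2}).toReal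
        ≤ ((n : ℝ) * s) / ε ^ 2 := by
      rw [le_div_iff₀ (by positivity)]
      calc ((volume : Measure (Fin n → Ω)) {x | ε ^ 2 ≤ (∑ k, Y (x k)) ^ 2}).toReal * ε ^ 2
          = ε ^ 2 * ((volume : Measure (Fin n → Ω)) {x | ε ^ 2 ≤ (∑ k, Y (x k)) ^ 2}).toReal := by
            ring
        _ ≤ ∫ x : Fin n → Ω, (∑ k, Y (x k)) ^ 2 := hmark
        _ ≤ (n : ℝ) * s := hF_val
    have hval : ((n : ℝ) * s) / ε ^ 2 = 1 / ((n : ℝ) * t ^ 2 * s) := by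
      have hn' : ((n : ℝ)) ≠ 0 := Nat.cast_ne_zero.mpr hn.ne'
      have ht' : t ≠ 0 := ht.ne'
      have hs' : s ≠ 0 := hs_pos.ne'
      field_simp [hε_def]
      ring
    calc (volume : Measure (Fin n → Ω)) B
        ≤ (volume : Measure (Fin n → Ω)) {x | ε ^ 2 ≤ (∑ k, Y (x k)) ^ 2} :=
          measure_mono hsub
      _ ≤ ENNReal.ofReal (1 / ((n : ℝ) * t ^ 2 * s)) := by
          rw [← hval]
          exact (ENNReal.le_ofReal_iff_toReal_le hfin (by positivity)).mpr htor
  -- per-alternative bound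
  set minv : ℝ := (Finset.Icc 2 m).inf' (Finset.nonempty_Icc.mpr hm)
      (fun i => hellSq μ p₀ (q i)) with hminv_def
  set E : ℝ := Real.exp (-((n : ℝ) * (1 - c) / 2) * minv) with hE_def
  -- the good set
  set N : Set Ω := {y | 0 < p₀ y ∧ 0 < q 1 y} with hN_def
  have h1N : ∀ᵐ y ∂(volume : Measure Ω), 0 < p₀ y := by
    rw [ae_iff]
    have hset : {y | ¬ 0 < p₀ y} = {y | p₀ y ≤ 0} := by ext y; simp [not_lt]
    have hSm : MeasurableSet {y | p₀ y ≤ 0} := measurableSet_le hp₀m measurable_const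
    rw [hset, show (volume : Measure Ω) = μ.withDensity fun x => ENNReal.ofReal (p₀ x) from hP₀,
      withDensity_apply _ hSm]
    rw [setLIntegral_congr_fun hSm (fun y (hy : p₀ y ≤ 0) => by
      simp [ENNReal.ofReal_eq_zero.mpr hy] : Set.EqOn (fun y => ENNReal.ofReal (p₀ y))
        (fun _ => (0 : ℝ≥0∞)) {y | p₀ y ≤ 0})]
    simp
  have hac : (volume : Measure Ω) ≪ μ := by
    rw [show (volume : Measure Ω) = μ.withDensity fun x => ENNReal.ofReal (p₀ x) from hP₀]
    exact withDensity_absolutelyContinuous μ _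
  have h2N : ∀ᵐ y ∂(volume : Measure Ω), (0 < p₀ y → 0 < q 1 y) :=
    hq₁pos.filter_mono hac.ae_le
  have hNae : ∀ᵐ y ∂(volume : Measure Ω), y ∈ N := by
    filter_upwards [h1N, h2N] with y hy1 hy2
    exact ⟨hy1, hy2 hy1⟩
  have hNc : (volume : Measure Ω) {y | ¬ y ∈ N} = 0 := ae_iff.mp hNae
  have hGoodc : (volume : Measure (Fin n → Ω)) {x : Fin n → Ω | ¬ ∀ k, x k ∈ N} = 0 := by
    refine measure_mono_null (fun x hx => ?_)
      (measure_iUnion_null (s := fun k : Fin n => Function.eval k ⁻¹' {y | ¬ y ∈ N})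
        fun k => ?_)
    · simp only [Set.mem_setOf_eq, not_forall] at hx
      obtain ⟨k, hk⟩ := hx
      exact Set.mem_iUnion.mpr ⟨k, hk⟩
    · rw [show (volume : Measure (Fin n → Ω)) = Measure.pi fun _ => (volume : Measure Ω)
        from volume_pi]
      exact Measure.pi_eval_preimage_null _ hNc
  have hcoef : (0 : ℝ) ≤ (n : ℝ) * (1 - c) / 2 := by
    have : (0 : ℝ) ≤ (n : ℝ) := Nat.cast_nonneg n
    nlinarith
  have hkey : ∀ i ∈ Finset.Icc 2 m,
      (volume : Measure (Fin n → Ω))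
        ({x | ∏ k : Fin n, q 1 (x k) ≤ ∏ k : Fin n, q i (x k)} ∩ Bᶜ)
      ≤ ENNReal.ofReal E := by
    intro i hi
    obtain ⟨hi2, him⟩ := Finset.mem_Icc.mp hi
    obtain ⟨hqim, hqi0, hqii, hqi1⟩ :=
      hq i (Finset.mem_Icc.mpr ⟨le_trans (by norm_num) hi2, him⟩)
    set vi : ℝ := hellSq μ p₀ (q i) with hvi_def
    set g : Ω → ℝ := fun y => Real.sqrt (q i y) / Real.sqrt (p₀ y) with hg_def
    have hpg : (fun y => p₀ y * g y) = fun y => Real.sqrt (p₀ y) * Real.sqrt (q i y) := by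
      funext y
      calc p₀ y * (Real.sqrt (q i y) / Real.sqrt (p₀ y))
          = (p₀ y / Real.sqrt (p₀ y)) * Real.sqrt (q i y) := by ring
        _ = Real.sqrt (p₀ y) * Real.sqrt (q i y) := by rw [Real.div_sqrt]
    have hsqm : Measurable fun y => Real.sqrt (p₀ y) * Real.sqrt (q i y) :=
      (Real.continuous_sqrt.measurable.comp hp₀m).mul
        (Real.continuous_sqrt.measurable.comp hqim)
    have hsq_int : Integrable (fun y => Real.sqrt (p₀ y) * Real.sqrt (q i y)) μ := by
      refine Integrable.mono' ((hp₀i.add hqii).div_const 2) hsqm.aestronglyMeasurable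
        (ae_of_all _ fun y => ?_)
      have h1 := Real.sq_sqrt (hp₀0 y)
      have h2 := Real.sq_sqrt (hqi0 y)
      have h3 := Real.sqrt_nonneg (p₀ y)
      have h4 := Real.sqrt_nonneg (q i y)
      rw [Real.norm_eq_abs, abs_of_nonneg (mul_nonneg h3 h4)]
      show Real.sqrt (p₀ y) * Real.sqrt (q i y) ≤ (p₀ y + q i y) / 2
      nlinarith [sq_nonneg (Real.sqrt (p₀ y) - Real.sqrt (q i y))]
    set Ii : ℝ := ∫ y, Real.sqrt (p₀ y) * Real.sqrt (q i y) ∂μ with hIi_def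
    have hsq_eq : (fun y => (Real.sqrt (p₀ y) - Real.sqrt (q i y)) ^ 2)
        = fun y => (p₀ y + q i y) - 2 * (Real.sqrt (p₀ y) * Real.sqrt (q i y)) := by
      funext y
      rw [sub_sq, Real.sq_sqrt (hp₀0 y), Real.sq_sqrt (hqi0 y)]
      ring
    have hvi_eq : vi = 2 - 2 * Ii := by
      rw [hvi_def]
      show (∫ y, (Real.sqrt (p₀ y) - Real.sqrt (q i y)) ^ 2 ∂μ) = 2 - 2 * Ii
      rw [hsq_eq, integral_sub
          (show Integrable (fun y => p₀ y + q i y) μ from hp₀i.add hqii)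
          (hsq_int.const_mul 2),
        integral_add hp₀i hqii, hp₀1, hqi1, integral_const_mul, ← hIi_def]
      ring
    have hIi_nonneg : 0 ≤ Ii :=
      integral_nonneg fun y => mul_nonneg (Real.sqrt_nonneg _) (Real.sqrt_nonneg _)
    have hvi_nonneg : 0 ≤ vi := by
      rw [hvi_def]
      exact integral_nonneg fun y => sq_nonneg _
    have hvi_le2 : vi ≤ 2 := by linarith
    have hminv_le : minv ≤ vi := Finset.inf'_le _ hi
    have hg_int : Integrable g (volume : Measure Ω) := by
      rw [htransi g, hpg]
      exact hsq_int
    have hg_val : ∫ y, g y ∂(volume : Measure Ω) = 1 - vi / 2 := by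
      rw [htrans g, hpg, ← hIi_def]
      linarith
    set r : ℝ := Real.exp (-((n : ℝ) * c * vi) / 2) with hr_def
    have hr_pos : 0 < r := Real.exp_pos _
    have hG_int : Integrable (fun x : Fin n → Ω => ∏ k, g (x k))
        (volume : Measure (Fin n → Ω)) :=
      Integrable.fintype_prod (f := fun _ : Fin n => g) fun _ => hg_int
    have hG_val : ∫ x : Fin n → Ω, ∏ k, g (x k) = (1 - vi / 2) ^ n := by
      rw [volume_pi, MeasureTheory.integral_fintype_prod_eq_pow (ι := Fin n) g, hg_val, Fintype.card_fin]
    have hG_nonneg : ∀ x : Fin n → Ω, 0 ≤ ∏ k, g (x k) := fun x =>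
      Finset.prod_nonneg fun k _ =>
        div_nonneg (Real.sqrt_nonneg _) (Real.sqrt_nonneg _)
    have hGe : ∫ x : Fin n → Ω, ∏ k, g (x k) ≤ Real.exp (-(n : ℝ) * vi / 2) := by
      rw [hG_val]
      have h1 : 1 - vi / 2 ≤ Real.exp (-(vi / 2)) := by
        have := Real.add_one_le_exp (-(vi / 2))
        linarith
      have h2 : (0 : ℝ) ≤ 1 - vi / 2 := by linarith
      calc (1 - vi / 2) ^ n ≤ (Real.exp (-(vi / 2))) ^ n := pow_le_pow_left₀ h2 h1 n
        _ = Real.exp (-(n : ℝ) * vi / 2) := by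
            rw [← Real.exp_nat_mul]
            ring_nf
    have hmark := mul_meas_ge_le_integral_of_nonneg
      (ae_of_all (volume : Measure (Fin n → Ω)) hG_nonneg) hG_int r
    have hincl : ({x : Fin n → Ω | ∏ k : Fin n, q 1 (x k) ≤ ∏ k : Fin n, q i (x k)} ∩ Bᶜ)
        ∩ {x : Fin n → Ω | ∀ k, x k ∈ N}
        ⊆ {x : Fin n → Ω | r ≤ ∏ k, g (x k)} := by
      rintro x ⟨⟨hA, hBc⟩, hGN⟩
      have hppos : ∀ k, 0 < p₀ (x k) := fun k => (hGN k).1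
      have hq1pos' : ∀ k, 0 < q 1 (x k) := fun k => (hGN k).2
      have hPp : 0 < ∏ k, p₀ (x k) := Finset.prod_pos fun k _ => hppos k
      have hQ1p : 0 < ∏ k, q 1 (x k) := Finset.prod_pos fun k _ => hq1pos' k
      have hA' : (∏ k : Fin n, q 1 (x k)) ≤ ∏ k : Fin n, q i (x k) := hA
      have hBc' : ¬ ((n : ℝ) * (dK + t * s) ≤ ∑ k, ℓ (x k)) := hBc
      have hsl : ∑ k, ℓ (x k) < (n : ℝ) * (dK + t * s) := not_le.mp hBc'
      have hbound : dK + t * s < c * vi := by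
        have h := hsep i hi
        have h' : dK ≤ M * hellSq μ p₀ (q 1) := hklD_eq ▸ hdK
        rw [← hvi_def] at h
        nlinarith
      have hsum_lt : ∑ k, ℓ (x k) < (n : ℝ) * (c * vi) :=
        lt_of_lt_of_le hsl
          (mul_le_mul_of_nonneg_left hbound.le (Nat.cast_nonneg n))
      have hlogsum : ∑ k, ℓ (x k)
          = Real.log (∏ k, p₀ (x k)) - Real.log (∏ k, q 1 (x k)) := by
        rw [Real.log_prod (fun k _ => (hppos k).ne'),
          Real.log_prod (fun k _ => (hq1pos' k).ne'), ← Finset.sum_sub_distrib]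
        exact Finset.sum_congr rfl fun k _ =>
          Real.log_div (hppos k).ne' (hq1pos' k).ne'
      have hkey2 : (∏ k, p₀ (x k)) * Real.exp (-((n : ℝ) * c * vi))
          ≤ ∏ k, q i (x k) := by
        have h2 : (∏ k, p₀ (x k)) * Real.exp (-((n : ℝ) * c * vi))
            = Real.exp (Real.log (∏ k, p₀ (x k)) - (n : ℝ) * (c * vi)) := by
          rw [Real.exp_sub, Real.exp_log hPp, Real.exp_neg]
          rw [show (n : ℝ) * c * vi = (n : ℝ) * (c * vi) from by ring]
          rw [div_eq_mul_inv]
        calc (∏ k, p₀ (x k)) * Real.exp (-((n : ℝ) * c * vi))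
            = Real.exp (Real.log (∏ k, p₀ (x k)) - (n : ℝ) * (c * vi)) := h2
          _ ≤ Real.exp (Real.log (∏ k, q 1 (x k))) :=
              Real.exp_le_exp.mpr (by rw [hlogsum] at hsum_lt; linarith)
          _ = ∏ k, q 1 (x k) := Real.exp_log hQ1p
          _ ≤ ∏ k, q i (x k) := hA'
      show r ≤ ∏ k, g (x k)
      have hprod_g : ∏ k, g (x k)
          = Real.sqrt (∏ k, q i (x k)) / Real.sqrt (∏ k, p₀ (x k)) := by
        rw [my_sqrt_prod _ _ (fun k _ => hqi0 (x k)),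
          my_sqrt_prod _ _ (fun k _ => hp₀0 (x k)), ← Finset.prod_div_distrib]
      rw [hprod_g, hr_def, le_div_iff₀ (Real.sqrt_pos.mpr hPp)]
      rw [Real.exp_half (-((n : ℝ) * c * vi)), ← Real.sqrt_mul (Real.exp_pos _).le]
      exact Real.sqrt_le_sqrt (by nlinarith [hkey2])
    have hsubU : ({x : Fin n → Ω | ∏ k : Fin n, q 1 (x k) ≤ ∏ k : Fin n, q i (x k)} ∩ Bᶜ)
        ⊆ {x : Fin n → Ω | r ≤ ∏ k, g (x k)} ∪ {x : Fin n → Ω | ¬ ∀ k, x k ∈ N} := by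
      intro x hx
      by_cases hN' : ∀ k, x k ∈ N
      · exact Or.inl (hincl ⟨hx, hN'⟩)
      · exact Or.inr hN'
    have hfin : (volume : Measure (Fin n → Ω)) {x : Fin n → Ω | r ≤ ∏ k, g (x k)} ≠ ⊤ :=
      measure_ne_top _ _
    have hexp_eq : Real.exp (-(n : ℝ) * vi / 2) / r
        = Real.exp (-((n : ℝ) * (1 - c) / 2) * vi) := by
      rw [hr_def, ← Real.exp_sub]
      congr 1
      ring
    have hE_le : Real.exp (-((n : ℝ) * (1 - c) / 2) * vi) ≤ E := by
      rw [hE_def]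
      exact Real.exp_le_exp.mpr (by nlinarith [hminv_le, hcoef])
    have htor : ((volume : Measure (Fin n → Ω)) {x : Fin n → Ω | r ≤ ∏ k, g (x k)}).toReal
        ≤ E := by
      have h1 : ((volume : Measure (Fin n → Ω)) {x : Fin n → Ω | r ≤ ∏ k, g (x k)}).toReal
          ≤ Real.exp (-(n : ℝ) * vi / 2) / r := by
        rw [le_div_iff₀ hr_pos]
        calc ((volume : Measure (Fin n → Ω)) {x : Fin n → Ω | r ≤ ∏ k, g (x k)}).toReal * r
            = r * ((volume : Measure (Fin n → Ω))
                {x : Fin n → Ω | r ≤ ∏ k, g (x k)}).toReal := by ring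
          _ ≤ ∫ x : Fin n → Ω, ∏ k, g (x k) := hmark
          _ ≤ Real.exp (-(n : ℝ) * vi / 2) := hGe
      rw [hexp_eq] at h1
      exact h1.trans hE_le
    refine le_trans (measure_mono hsubU) (le_trans (measure_union_le _ _) ?_)
    rw [hGoodc, add_zero]
    exact (ENNReal.le_ofReal_iff_toReal_le hfin (hE_def ▸ (Real.exp_pos _).le)).mpr htor
  -- union bound and conclusion
  have hTsub : {x : Fin n → Ω |
        ∃ i ∈ Finset.Icc 2 m, ∏ k : Fin n, q 1 (x k) ≤ ∏ k : Fin n, q i (x k)}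
      ⊆ B ∪ ⋃ i ∈ Finset.Icc 2 m,
          ({x : Fin n → Ω | ∏ k : Fin n, q 1 (x k) ≤ ∏ k : Fin n, q i (x k)} ∩ Bᶜ) := by
    intro x hx
    obtain ⟨i, hi, hle⟩ := hx
    by_cases hxB : x ∈ B
    · exact Or.inl hxB
    · exact Or.inr (Set.mem_biUnion hi ⟨hle, hxB⟩)
  have hUle : (volume : Measure (Fin n → Ω))
      (⋃ i ∈ Finset.Icc 2 m,
        ({x : Fin n → Ω | ∏ k : Fin n, q 1 (x k) ≤ ∏ k : Fin n, q i (x k)} ∩ Bᶜ))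
      ≤ ∑ _i ∈ Finset.Icc 2 m, ENNReal.ofReal E :=
    le_trans (measure_biUnion_finset_le _ _) (Finset.sum_le_sum hkey)
  have hsum : ∑ _i ∈ Finset.Icc 2 m, ENNReal.ofReal E
      = ENNReal.ofReal (((m : ℝ) - 1) * E) := by
    rw [Finset.sum_const, Nat.card_Icc, show m + 1 - 2 = m - 1 from by omega,
      nsmul_eq_mul, ← ENNReal.ofReal_natCast (m - 1),
      ← ENNReal.ofReal_mul (Nat.cast_nonneg _)]
    congr 1
    rw [Nat.cast_sub (by omega : 1 ≤ m)]
    norm_num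
  have ha : (0 : ℝ) ≤ 1 / ((n : ℝ) * t ^ 2 * s) :=
    one_div_nonneg.mpr (mul_nonneg (mul_nonneg (Nat.cast_nonneg n) (sq_nonneg t)) hs_pos.le)
  have hb : (0 : ℝ) ≤ ((m : ℝ) - 1) * E := by
    have hm' : (2 : ℝ) ≤ (m : ℝ) := by exact_mod_cast hm
    exact mul_nonneg (by linarith) (hE_def ▸ (Real.exp_pos _).le)
  refine le_trans (measure_mono hTsub) (le_trans (measure_union_le _ _) ?_)
  exact le_trans (add_le_add hcheb (hUle.trans_eq hsum)) (ENNReal.ofReal_add ha hb).symm.le
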